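/- arXiv:2204.04270 — 2 statements merged into one kernel-verified Lean document; each statement's English description precedes it below -/
import Mathlib

section
/- Let E_1,...,E_n,E_{n+1} be exchangeable real-valued random variables and let Q̂ be the ⌈(1−α)(n+1)⌉-th smallest value among E_1,...,E_n (with Q̂ = +∞ if ⌈(1−α)(n+1)⌉ > n). Then P[E_{n+1} ≤ Q̂] ≥ 1 − α. -/
open MeasureTheory

/-- The `k`-th smallest value of a multiset of reals (1-indexed),
defined as `⊤` when `k` exceeds the number of elements. -/
noncomputable def kthSmallest (s : Multiset ℝ) (k : ℕ) : EReal :=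
  if h : k - 1 < Multiset.card s then
    (((s.sort (· ≤ ·)).get ⟨k - 1, by simpa using h⟩ : ℝ) : EReal)
  else ⊤


lemma sorted_countP_iff (l : List ℝ) (hs : l.Pairwise (· ≤ ·)) (p : ℝ → Prop) [DecidablePred p]
    (hp : ∀ y z : ℝ, y ≤ z → p z → p y) (i : ℕ) (hi : i < l.length) :
    p (l.get ⟨i, hi⟩) ↔ i < l.countP (fun a => decide (p a)) := by
  have hmono : Monotone l.get := hs.sortedLE.monotone_get
  constructor
  · intro hpi
    have hall : ∀ a ∈ l.take (i+1), p a := by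
      intro a ha
      obtain ⟨j, hj, rfl⟩ := List.mem_iff_getElem.mp ha
      have hj' : j < i + 1 := by simp at hj; omega
      have hj'' : j < l.length := by omega
      rw [List.getElem_take]
      have : l.get ⟨j, hj''⟩ ≤ l.get ⟨i, hi⟩ := hmono (by simp; omega)
      exact hp _ _ this hpi
    have h1 : (l.take (i+1)).countP (fun a => decide (p a)) = i + 1 := by
      rw [List.countP_eq_length.mpr (by intro a ha; simpa using hall a ha)]
      simp; omega
    have h2 : l.countP (fun a => decide (p a))
        = (l.take (i+1)).countP (fun a => decide (p a))
          + (l.drop (i+1)).countP (fun a => decide (p a)) := by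
      conv_lhs => rw [← List.take_append_drop (i+1) l]
      rw [List.countP_append]
    omega
  · intro hcount
    by_contra hnp
    have hd0 : (l.drop i).countP (fun a => decide (p a)) = 0 := by
      rw [List.countP_eq_zero]
      intro a ha
      obtain ⟨j, hj, rfl⟩ := List.mem_iff_getElem.mp ha
      have hj' : i + j < l.length := by simp at hj; omega
      rw [List.getElem_drop]
      have : l.get ⟨i, hi⟩ ≤ l.get ⟨i + j, hj'⟩ := hmono (by simp)
      simp only [decide_eq_true_eq]
      exact fun hpa => hnp (hp _ _ this (by simpa using hpa))
    have h2 : l.countP (fun a => decide (p a))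
        = (l.take i).countP (fun a => decide (p a))
          + (l.drop i).countP (fun a => decide (p a)) := by
      conv_lhs => rw [← List.take_append_drop i l]
      rw [List.countP_append]
    have h3 := List.countP_le_length (l := l.take i) (p := fun a => decide (p a))
    simp only [List.length_take] at h3
    omega

-- card of multiset filter = countP of sorted list
lemma card_filter_eq_countP_sort (s : Multiset ℝ) (p : ℝ → Prop) [DecidablePred p] :
    (s.filter p).card = (s.sort (· ≤ ·)).countP (fun a => decide (p a)) := by
  conv_lhs => rw [← Multiset.sort_eq s (· ≤ ·)]
  rw [← Multiset.countP_eq_card_filter]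
  rfl

-- finset filter over univ vs multiset of values
lemma card_filter_map {ι : Type*} [Fintype ι] [DecidableEq ι] (f : ι → ℝ) (p : ℝ → Prop)
    [DecidablePred p] :
    ((Multiset.map f Finset.univ.val).filter p).card
      = (Finset.univ.filter (fun i => p (f i))).card := by
  rw [Finset.card_def, Finset.filter_val]
  rw [← Multiset.countP_eq_card_filter, ← Multiset.countP_eq_card_filter,
    Multiset.countP_map]
  rw [← Multiset.countP_eq_card_filter]

-- characterization: kthSmallest s k < x  iff  k ≤ #{elements < x}
lemma kthSmallest_lt_iff (s : Multiset ℝ) (k : ℕ) (hk : 1 ≤ k) (hks : k - 1 < Multiset.card s)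
    (x : ℝ) :
    kthSmallest s k < (x : EReal) ↔ k ≤ (s.filter (· < x)).card := by
  rw [kthSmallest, dif_pos hks, EReal.coe_lt_coe_iff]
  have hs : (s.sort (· ≤ ·)).Pairwise (· ≤ ·) := Multiset.pairwise_sort s _
  have hlen : k - 1 < (s.sort (· ≤ ·)).length := by simpa using hks
  have := sorted_countP_iff (s.sort (· ≤ ·)) hs (· < x)
    (fun y z hyz hz => lt_of_le_of_lt hyz hz) (k-1) hlen
  rw [card_filter_eq_countP_sort]
  constructor
  · intro h; have := this.mp h; omega
  · intro h; exact this.mpr (by omega)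

-- deterministic bound: #{j : f has ≥ k values strictly below f j} ≤ n+1-k
lemma det_bound (n k : ℕ) (hk : 1 ≤ k) (hkn : k ≤ n + 1) (f : Fin (n+1) → ℝ) :
    (Finset.univ.filter
        (fun j => k ≤ (Finset.univ.filter (fun i : Fin (n+1) => f i < f j)).card)).card
      ≤ n + 1 - k := by
  set s : Multiset ℝ := Multiset.map f Finset.univ.val with hsdef
  have hcard : Multiset.card s = n + 1 := by simp [hsdef]
  have hks : k - 1 < Multiset.card s := by omega
  have hlen : k - 1 < (s.sort (· ≤ ·)).length := by simpa using hks
  set v : ℝ := (s.sort (· ≤ ·)).get ⟨k-1, hlen⟩ with hv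
  have hs : (s.sort (· ≤ ·)).Pairwise (· ≤ ·) := Multiset.pairwise_sort s _
  -- T = indices with f j ≤ v has card ≥ k
  set T := Finset.univ.filter (fun j : Fin (n+1) => f j ≤ v) with hT
  have hTcard : k ≤ T.card := by
    have hiff := sorted_countP_iff (s.sort (· ≤ ·)) hs (· ≤ v)
      (fun y z hyz hz => le_trans hyz hz) (k-1) hlen
    have h1 : k - 1 < (s.sort (· ≤ ·)).countP (fun a => decide (a ≤ v)) :=
      hiff.mp le_rfl
    have h2 : T.card = (s.filter (· ≤ v)).card := (card_filter_map f (· ≤ v)).symm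
    rw [h2, card_filter_eq_countP_sort]
    omega
  -- S members have v < f j
  set S := Finset.univ.filter
    (fun j : Fin (n+1) => k ≤ (Finset.univ.filter (fun i : Fin (n+1) => f i < f j)).card) with hS
  have hdisj : Disjoint S T := by
    rw [Finset.disjoint_left]
    intro j hjS hjT
    rw [hS, Finset.mem_filter] at hjS
    rw [hT, Finset.mem_filter] at hjT
    have hiff := sorted_countP_iff (s.sort (· ≤ ·)) hs (· < f j)
      (fun y z hyz hz => lt_of_le_of_lt hyz hz) (k-1) hlen
    have hcnt : (Finset.univ.filter (fun i : Fin (n+1) => f i < f j)).card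
        = (s.sort (· ≤ ·)).countP (fun a => decide (a < f j)) := by
      rw [← card_filter_eq_countP_sort, card_filter_map]
    have : v < f j := hiff.mpr (by omega)
    exact absurd hjT.2 (not_le.mpr this)
  have := Finset.card_union_of_disjoint hdisj ▸ Finset.card_le_univ (S ∪ T)
  simp only [Finset.card_univ, Fintype.card_fin] at this
  omega

-- count over Fin (n+1) with target f(last) equals count over the first n
lemma count_last (n : ℕ) (f : Fin (n+1) → ℝ) :
    (Finset.univ.filter (fun i : Fin (n+1) => f i < f (Fin.last n))).card
      = (Finset.univ.filter (fun i : Fin n => f i.castSucc < f (Fin.last n))).card := by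
  rw [Finset.card_filter, Finset.card_filter, Fin.sum_univ_castSucc]
  simp

-- event equivalence
lemma event_iff (n k : ℕ) (hk : 1 ≤ k) (hkn : k ≤ n) (f : Fin (n+1) → ℝ) :
    ¬ ((f (Fin.last n) : EReal)
        ≤ kthSmallest (Multiset.map (fun i : Fin n => f i.castSucc) Finset.univ.val) k)
      ↔ k ≤ (Finset.univ.filter (fun i : Fin (n+1) => f i < f (Fin.last n))).card := by
  rw [not_le]
  have hcard : Multiset.card (Multiset.map (fun i : Fin n => f i.castSucc) Finset.univ.val)
      = n := by simp
  rw [kthSmallest_lt_iff _ k hk (by omega), card_filter_map, count_last]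

-- permutation invariance of the count
lemma count_perm (n : ℕ) (g : Fin (n+1) → ℝ) (σ : Equiv.Perm (Fin (n+1))) (t : ℝ) :
    (Finset.univ.filter (fun i : Fin (n+1) => g (σ i) < t)).card
      = (Finset.univ.filter (fun i : Fin (n+1) => g i < t)).card := by
  rw [Finset.card_filter, Finset.card_filter]
  exact Fintype.sum_equiv σ _ _ (fun i => rfl)

open MeasureTheory

theorem stmt_5 {Ω : Type*} [MeasurableSpace Ω] (μ : Measure Ω) [IsProbabilityMeasure μ]
    (n : ℕ) (hn : 1 ≤ n) (α : ℝ) (hα : α ∈ Set.Ioo (0:ℝ) 1)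
    (E : Fin (n + 1) → Ω → ℝ)
    (hmeas : ∀ i, Measurable (E i))
    (hexch : ∀ π : Equiv.Perm (Fin (n + 1)),
      Measure.map (fun ω => fun i => E (π i) ω) μ
        = Measure.map (fun ω => fun i => E i ω) μ) :
    ENNReal.ofReal (1 - α) ≤
      μ {ω | (E (Fin.last n) ω : EReal) ≤
        kthSmallest (Multiset.map (fun i : Fin n => E i.castSucc ω) Finset.univ.val)
          ⌈(1 - α) * ((n : ℝ) + 1)⌉₊} := by
  classical
  obtain ⟨hα0, hα1⟩ := hα
  set k : ℕ := ⌈(1 - α) * ((n : ℝ) + 1)⌉₊ with hkdef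
  have hkreal : (1 - α) * ((n : ℝ) + 1) ≤ (k : ℝ) := Nat.le_ceil _
  have hk1 : 1 ≤ k := by
    have : (0:ℝ) < (1 - α) * ((n : ℝ) + 1) := by nlinarith
    exact Nat.one_le_iff_ne_zero.mpr (by
      intro h; rw [hkdef] at h
      exact absurd (Nat.ceil_eq_zero.mp h) (not_le.mpr this))
  have hkn1 : k ≤ n + 1 := by
    rw [hkdef]
    apply Nat.ceil_le.mpr
    have : (1 - α) * ((n : ℝ) + 1) ≤ (n : ℝ) + 1 := by nlinarith
    push_cast; linarith
  by_cases hkn : k ≤ n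
  case neg =>
    -- k = n + 1 : the quantile is ⊤, the event is everything
    have hset : {ω : Ω | (E (Fin.last n) ω : EReal) ≤
        kthSmallest (Multiset.map (fun i : Fin n => E i.castSucc ω) Finset.univ.val) k}
        = Set.univ := by
      ext ω
      simp only [Set.mem_setOf_eq, Set.mem_univ, iff_true]
      rw [kthSmallest, dif_neg (by simp; omega)]
      exact le_top
    rw [hset]
    simp only [measure_univ]
    exact ENNReal.ofReal_le_one.mpr (by linarith)
  case pos =>
    -- main case
    set V : Ω → (Fin (n+1) → ℝ) := fun ω i => E i ω with hVdef
    have hV : Measurable V := measurable_pi_lambda _ hmeas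
    set B : Set (Fin (n+1) → ℝ) :=
      {g | k ≤ (Finset.univ.filter (fun i : Fin (n+1) => g i < g (Fin.last n))).card} with hBdef
    have hcntMeas : Measurable (fun g : Fin (n+1) → ℝ =>
        (Finset.univ.filter (fun i : Fin (n+1) => g i < g (Fin.last n))).card) := by
      have : (fun g : Fin (n+1) → ℝ =>
          (Finset.univ.filter (fun i : Fin (n+1) => g i < g (Fin.last n))).card)
          = fun g => ∑ i : Fin (n+1), if g i < g (Fin.last n) then 1 else 0 := by
        funext g; rw [Finset.card_filter]
      rw [this]
      apply Finset.measurable_sum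
      intro i _
      exact Measurable.ite
        (measurableSet_lt (measurable_pi_apply i) (measurable_pi_apply (Fin.last n)))
        measurable_const measurable_const
    have hB : MeasurableSet B := by
      have : B = (fun g : Fin (n+1) → ℝ =>
          (Finset.univ.filter (fun i : Fin (n+1) => g i < g (Fin.last n))).card) ⁻¹'
          Set.Ici k := rfl
      rw [this]
      exact hcntMeas measurableSet_Ici
    -- the swapped versions
    set W : Fin (n+1) → Ω → (Fin (n+1) → ℝ) :=
      fun j ω i => E (Equiv.swap j (Fin.last n) i) ω with hWdef
    have hW : ∀ j, Measurable (W j) :=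
      fun j => measurable_pi_lambda _ (fun i => hmeas _)
    set A : Fin (n+1) → Set Ω := fun j => W j ⁻¹' B with hAdef
    have hA : ∀ j, MeasurableSet (A j) := fun j => (hW j) hB
    have hAeq : ∀ j, μ (A j) = μ (V ⁻¹' B) := by
      intro j
      have h1 : μ (A j) = (Measure.map (W j) μ) B := (Measure.map_apply (hW j) hB).symm
      have h2 : μ (V ⁻¹' B) = (Measure.map V μ) B := (Measure.map_apply hV hB).symm
      rw [h1, h2, hexch (Equiv.swap j (Fin.last n))]
    -- pointwise membership characterization
    have hmem : ∀ j ω, ω ∈ A j ↔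
        k ≤ (Finset.univ.filter (fun i : Fin (n+1) => E i ω < E j ω)).card := by
      intro j ω
      have hlast : W j ω (Fin.last n) = E j ω := by
        simp [hWdef, Equiv.swap_apply_right]
      have : ω ∈ A j ↔ k ≤ (Finset.univ.filter
          (fun i : Fin (n+1) => W j ω i < W j ω (Fin.last n))).card := Iff.rfl
      rw [this, hlast]
      have := count_perm n (V ω) (Equiv.swap j (Fin.last n)) (E j ω)
      constructor
      · intro h; rw [← this]; exact h
      · intro h; rw [hWdef]; simpa [hVdef] using this ▸ h
    -- pointwise sum bound
    have hpt : ∀ ω, ∑ j : Fin (n+1), (A j).indicator (fun _ => (1:ENNReal)) ω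
        ≤ ((n + 1 - k : ℕ) : ENNReal) := by
      intro ω
      have h1 : ∑ j : Fin (n+1), (A j).indicator (fun _ => (1:ENNReal)) ω
          = ((Finset.univ.filter (fun j : Fin (n+1) => ω ∈ A j)).card : ENNReal) := by
        rw [Finset.card_filter]
        push_cast
        refine Finset.sum_congr rfl (fun j _ => ?_)
        rw [Set.indicator_apply]
      rw [h1]
      have h2 : (Finset.univ.filter (fun j : Fin (n+1) => ω ∈ A j))
          = (Finset.univ.filter (fun j : Fin (n+1) =>
              k ≤ (Finset.univ.filter (fun i : Fin (n+1) => V ω i < V ω j)).card)) := by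
        apply Finset.filter_congr
        intro j _
        exact hmem j ω
      rw [h2]
      exact_mod_cast Nat.cast_le.mpr (det_bound n k hk1 hkn1 (V ω))
    -- sum of measures bound
    have hsum : ∑ j : Fin (n+1), μ (A j) ≤ ((n + 1 - k : ℕ) : ENNReal) := by
      have h1 : ∀ j : Fin (n+1), μ (A j)
          = ∫⁻ ω, (A j).indicator (fun _ => (1:ENNReal)) ω ∂μ := by
        intro j
        exact (lintegral_indicator_one (hA j)).symm
      calc ∑ j : Fin (n+1), μ (A j)
          = ∫⁻ ω, ∑ j : Fin (n+1), (A j).indicator (fun _ => (1:ENNReal)) ω ∂μ := by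
            rw [lintegral_finset_sum]
            · exact Finset.sum_congr rfl (fun j _ => h1 j)
            · exact fun j _ => (measurable_const.indicator (hA j))
        _ ≤ ∫⁻ _, ((n + 1 - k : ℕ) : ENNReal) ∂μ := lintegral_mono hpt
        _ = ((n + 1 - k : ℕ) : ENNReal) := by simp
    have hmul : ((n + 1 : ℕ) : ENNReal) * μ (V ⁻¹' B) ≤ ((n + 1 - k : ℕ) : ENNReal) := by
      have : ∑ j : Fin (n+1), μ (A j) = ((n + 1 : ℕ) : ENNReal) * μ (V ⁻¹' B) := by
        rw [Finset.sum_congr rfl (fun j _ => hAeq j), Finset.sum_const, Finset.card_univ]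
        simp [nsmul_eq_mul]
      rw [← this]; exact hsum
    have hbad : μ (V ⁻¹' B) ≤ ENNReal.ofReal α := by
      have hne0 : ((n + 1 : ℕ) : ENNReal) ≠ 0 := by simp
      have hnetop : ((n + 1 : ℕ) : ENNReal) ≠ ⊤ := by simp
      rw [← ENNReal.mul_le_mul_iff_right hne0 hnetop]
      refine le_trans hmul ?_
      have hcast : ((n + 1 - k : ℕ) : ℝ) = (n : ℝ) + 1 - k := by
        push_cast [Nat.cast_sub hkn1]; ring
      have hreal : ((n + 1 - k : ℕ) : ℝ) ≤ ((n:ℝ) + 1) * α := by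
        rw [hcast]; nlinarith
      calc ((n + 1 - k : ℕ) : ENNReal) = ENNReal.ofReal ((n + 1 - k : ℕ) : ℝ) := by
            rw [ENNReal.ofReal_natCast]
        _ ≤ ENNReal.ofReal (((n:ℝ) + 1) * α) := ENNReal.ofReal_le_ofReal hreal
        _ = ENNReal.ofReal ((n:ℝ) + 1) * ENNReal.ofReal α :=
            ENNReal.ofReal_mul (by positivity)
        _ = ((n + 1 : ℕ) : ENNReal) * ENNReal.ofReal α := by
            rw [← ENNReal.ofReal_natCast (n+1)]; push_cast; ring_nf
    -- complement identification
    have hcompl : {ω : Ω | (E (Fin.last n) ω : EReal) ≤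
        kthSmallest (Multiset.map (fun i : Fin n => E i.castSucc ω) Finset.univ.val) k}
        = (V ⁻¹' B)ᶜ := by
      ext ω
      simp only [Set.mem_setOf_eq, Set.mem_compl_iff, Set.mem_preimage]
      have h := event_iff n k hk1 hkn (V ω)
      constructor
      · intro hle hB'
        exact (h.mpr hB') hle
      · intro hnB
        by_contra hc
        exact hnB (h.mp hc)
    rw [hcompl, measure_compl (hV hB) (measure_ne_top μ _), measure_univ]
    have : ENNReal.ofReal (1 - α) = 1 - ENNReal.ofReal α := by
      rw [ENNReal.ofReal_sub 1 (le_of_lt hα0), ENNReal.ofReal_one]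
    rw [this]
    exact tsub_le_tsub_left hbad 1
end

section
/- Let E_1,...,E_n,E_{n+1} be exchangeable real-valued random variables with no ties almost surely. Let Q̂ be the ⌈(1−α)(n+1)⌉-th smallest of E_1,...,E_n, and suppose ⌈(1−α)(n+1)⌉ ≤ n. Then P[E_{n+1} ≤ Q̂] ≤ 1 − α + 1/(n+1). -/
open MeasureTheory
open scoped ENNReal

/-- rank counting: for injective `x` on a fintype of card `m`, the number of `j`
with rank at most `k` equals `k` (for `k ≤ m`). -/
lemma rank_count_aux {ι : Type*} [Fintype ι] [DecidableEq ι] (x : ι → ℝ)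
    (hx : Function.Injective x) (k : ℕ) (hk : k ≤ Fintype.card ι) :
    (Finset.univ.filter fun j => (Finset.univ.filter fun i => x i ≤ x j).card ≤ k).card = k := by
  set m := Fintype.card ι with hm
  set r : ι → ℕ := fun j => (Finset.univ.filter fun i => x i ≤ x j).card with hr
  have hmono : ∀ j j', x j < x j' → r j < r j' := by
    intro j j' h
    apply Finset.card_lt_card
    constructor
    · intro i hi
      simp only [hr, Finset.mem_filter, Finset.mem_univ, true_and] at hi ⊢
      exact hi.trans h.le
    · intro hsub
      have : j' ∈ Finset.univ.filter fun i => x i ≤ x j' := by simp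
      have := hsub this
      simp only [hr, Finset.mem_filter, Finset.mem_univ, true_and] at this
      exact absurd this (not_le.mpr h)
  have hinj : Function.Injective r := by
    intro j j' h
    by_contra hne
    rcases lt_trichotomy (x j) (x j') with hlt | heq | hgt
    · exact absurd h (hmono j j' hlt).ne
    · exact hne (hx heq)
    · exact absurd h.symm (hmono j' j hgt).ne
  have hr1 : ∀ j, r j ∈ Finset.Icc 1 m := by
    intro j
    simp only [Finset.mem_Icc]
    constructor
    · have : j ∈ Finset.univ.filter fun i => x i ≤ x j := by simp
      exact Finset.card_pos.mpr ⟨j, this⟩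
    · exact (Finset.card_filter_le _ _).trans (by simp [hm])
  have himg : Finset.univ.image r = Finset.Icc 1 m := by
    apply Finset.eq_of_subset_of_card_le
    · intro a ha
      simp only [Finset.mem_image] at ha
      obtain ⟨j, _, rfl⟩ := ha
      exact hr1 j
    · rw [Finset.card_image_of_injective _ hinj]
      simp [hm]
  have : ((Finset.univ.filter fun j => r j ≤ k).image r).card
      = (Finset.univ.filter fun j => r j ≤ k).card :=
    Finset.card_image_of_injective _ hinj
  rw [← this]
  have himg2 : (Finset.univ.filter fun j => r j ≤ k).image r
      = (Finset.univ.image r).filter (· ≤ k) := (Finset.filter_image (p := (· ≤ k))).symm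
  rw [himg2, himg]
  have : (Finset.Icc 1 m).filter (· ≤ k) = Finset.Icc 1 k := by
    ext a; simp only [Finset.mem_filter, Finset.mem_Icc]; omega
  rw [this, Nat.card_Icc]; omega

/-- In a sorted list, if `t ≤ l[k]`, then at most `k` elements are `< t`. -/
lemma sorted_countP_lt_aux {l : List ℝ} (hs : l.Pairwise (· ≤ ·)) {k : ℕ} (hk : k < l.length)
    (t : ℝ) (ht : t ≤ l.get ⟨k, hk⟩) :
    l.countP (fun a => decide (a < t)) ≤ k := by
  have hdrop : ∀ x ∈ l.drop k, ¬ (x < t) := by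
    intro x hx
    have hcons : l.drop k = l.get ⟨k, hk⟩ :: l.drop (k+1) := by
      rw [List.drop_eq_getElem_cons hk]; rfl
    have hsd : (l.drop k).Pairwise (· ≤ ·) := hs.sublist (List.drop_sublist _ _)
    rw [hcons] at hx hsd
    rcases List.mem_cons.mp hx with rfl | hx'
    · exact not_lt.mpr ht
    · have := (List.pairwise_cons.mp hsd).1 x hx'
      exact not_lt.mpr (ht.trans this)
  calc l.countP (fun a => decide (a < t))
      = (l.take k ++ l.drop k).countP (fun a => decide (a < t)) := by rw [List.take_append_drop]
    _ = (l.take k).countP _ + (l.drop k).countP _ := List.countP_append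
    _ ≤ (l.take k).length + 0 := by
        refine Nat.add_le_add List.countP_le_length ?_
        rw [Nat.le_zero, List.countP_eq_zero]
        intro x hx
        simpa using hdrop x hx
    _ ≤ k := by simp [List.length_take]

/-- If `t` is at most the `k`-th smallest of the values of `v`, then fewer than `k`
of the values are strictly below `t`. -/
lemma kth_count_aux {n : ℕ} (v : Fin n → ℝ) (t : ℝ) (k : ℕ) (hk1 : 1 ≤ k) (hkn : k ≤ n)
    (h : (t : EReal) ≤ kthSmallest (Multiset.map v Finset.univ.val) k) :
    (Finset.univ.filter fun i => v i < t).card ≤ k - 1 := by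
  set s : Multiset ℝ := Multiset.map v Finset.univ.val with hs
  have hcard : Multiset.card s = n := by simp [hs]
  have hlt : k - 1 < Multiset.card s := by omega
  set l : List ℝ := s.sort (· ≤ ·) with hl
  have hlen : l.length = n := by rw [hl, Multiset.length_sort, hcard]
  have hsort : l.Pairwise (· ≤ ·) := Multiset.pairwise_sort _ _
  rw [kthSmallest, dif_pos hlt] at h
  have ht : t ≤ l.get ⟨k - 1, by omega⟩ := by exact_mod_cast h
  have hcount := sorted_countP_lt_aux hsort (k := k - 1) (by omega) t ht
  have hconv : (Finset.univ.filter fun i => v i < t).card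
      = l.countP (fun a => decide (a < t)) := by
    have h1 : (Finset.univ.filter fun i => v i < t).card
        = Multiset.countP (fun a => a < t) s := by
      rw [hs, Multiset.countP_map]
      rfl
    rw [h1]
    have : (l : Multiset ℝ) = s := Multiset.sort_eq _ _
    rw [← this, Multiset.coe_countP]
  omega

/-- Cardinality of a filter is invariant under permuting the argument of the predicate. -/
lemma card_filter_perm_aux {ι : Type*} [Fintype ι] [DecidableEq ι] (π : Equiv.Perm ι)
    (P : ι → Prop) [DecidablePred P] :
    (Finset.univ.filter fun i => P (π i)).card = (Finset.univ.filter P).card := by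
  refine Finset.card_bij (fun i _ => π i) ?_ ?_ ?_
  · intro i hi
    simp only [Finset.mem_filter, Finset.mem_univ, true_and] at hi ⊢
    exact hi
  · intro a _ b _ h
    exact π.injective h
  · intro b hb
    refine ⟨π.symm b, ?_, by simp⟩
    simp only [Finset.mem_filter, Finset.mem_univ, true_and, Equiv.apply_symm_apply] at hb ⊢
    exact hb

theorem stmt_6 {Ω : Type*} [MeasurableSpace Ω] (μ : Measure Ω) [IsProbabilityMeasure μ]
    (n : ℕ) (hn : 1 ≤ n) (α : ℝ) (hα : α ∈ Set.Ioo (0:ℝ) 1)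
    (hk : ⌈(1 - α) * ((n : ℝ) + 1)⌉₊ ≤ n)
    (E : Fin (n + 1) → Ω → ℝ)
    (hmeas : ∀ i, Measurable (E i))
    (hexch : ∀ π : Equiv.Perm (Fin (n + 1)),
      Measure.map (fun ω => fun i => E (π i) ω) μ
        = Measure.map (fun ω => fun i => E i ω) μ)
    (hties : ∀ i j : Fin (n + 1), i ≠ j → μ {ω | E i ω = E j ω} = 0) :
    μ {ω | (E (Fin.last n) ω : EReal) ≤
        kthSmallest (Multiset.map (fun i : Fin n => E i.castSucc ω) Finset.univ.val)
          ⌈(1 - α) * ((n : ℝ) + 1)⌉₊}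
      ≤ ENNReal.ofReal (1 - α + 1 / ((n : ℝ) + 1)) := by
  classical
  obtain ⟨hα0, hα1⟩ := hα
  set k := ⌈(1 - α) * ((n : ℝ) + 1)⌉₊ with hkdef
  have hnpos : (0:ℝ) < (n:ℝ) + 1 := by positivity
  have hk1 : 1 ≤ k := by
    have : 0 < (1 - α) * ((n : ℝ) + 1) := by nlinarith
    exact Nat.ceil_pos.mpr this
  -- the rank function on vectors
  set rank : (Fin (n+1) → ℝ) → Fin (n+1) → ℕ :=
    fun x j => (Finset.univ.filter fun i => x i ≤ x j).card with hrank
  set S : Fin (n+1) → Set (Fin (n+1) → ℝ) := fun j => {x | rank x j ≤ k} with hSdef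
  have hrankmeas : ∀ j, Measurable fun x : Fin (n+1) → ℝ => rank x j := by
    intro j
    have : (fun x : Fin (n+1) → ℝ => rank x j)
        = fun x => ∑ i, if x i ≤ x j then 1 else 0 := by
      funext x
      show (Finset.univ.filter fun i => x i ≤ x j).card = _
      rw [Finset.card_filter]
    rw [this]
    refine Finset.measurable_sum _ (fun i _ => ?_)
    exact Measurable.ite
      (measurableSet_le (measurable_pi_apply i) (measurable_pi_apply j))
      measurable_const measurable_const
  have hSmeas : ∀ j, MeasurableSet (S j) := by
    intro j
    show MeasurableSet ((fun x => rank x j) ⁻¹' Set.Iic k)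
    exact (hrankmeas j) measurableSet_Iic
  set F : Ω → (Fin (n+1) → ℝ) := fun ω i => E i ω with hF
  have hFmeas : Measurable F := measurable_pi_lambda _ (fun i => hmeas i)
  set A : Fin (n+1) → Set Ω := fun j => F ⁻¹' S j with hA
  have hAmeas : ∀ j, MeasurableSet (A j) := fun j => hFmeas (hSmeas j)
  -- all A j have the same measure, by exchangeability
  have hAeq : ∀ j, μ (A j) = μ (A (Fin.last n)) := by
    intro j
    set π : Equiv.Perm (Fin (n+1)) := Equiv.swap j (Fin.last n) with hπ
    have hG : Measurable fun ω => fun i => E (π i) ω :=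
      measurable_pi_lambda _ (fun i => hmeas (π i))
    have hset : (fun ω => fun i => E (π i) ω) ⁻¹' S (Fin.last n) = A j := by
      ext ω
      simp only [hA, hSdef, Set.mem_preimage, Set.mem_setOf_eq, hrank, hF]
      have hπlast : π (Fin.last n) = j := Equiv.swap_apply_right _ _
      have hcards : (Finset.univ.filter fun i => E (π i) ω ≤ E (π (Fin.last n)) ω).card
          = (Finset.univ.filter fun i => E i ω ≤ E j ω).card := by
        calc (Finset.univ.filter fun i => E (π i) ω ≤ E (π (Fin.last n)) ω).card
            = (Finset.univ.filter fun i => E (π i) ω ≤ E j ω).card := by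
              simp only [hπlast]
          _ = _ := card_filter_perm_aux π (fun i => E i ω ≤ E j ω)
      rw [hcards]
    have h1 : μ (A j) = Measure.map (fun ω => fun i => E (π i) ω) μ (S (Fin.last n)) := by
      rw [Measure.map_apply hG (hSmeas _), hset]
    rw [h1, hexch π, Measure.map_apply hFmeas (hSmeas _)]
  -- the ties set
  set T : Set Ω := ⋃ (i) (j) (_ : i ≠ j), {ω | E i ω = E j ω} with hT
  have hTnull : μ T = 0 := by
    rw [hT]
    refine measure_iUnion_null fun i => measure_iUnion_null fun j => measure_iUnion_null fun h =>
      hties i j h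
  have hinj : ∀ ω, ω ∉ T → Function.Injective (F ω) := by
    intro ω hω i j hij
    by_contra hne
    exact hω (Set.mem_iUnion.mpr ⟨i, Set.mem_iUnion.mpr ⟨j, Set.mem_iUnion.mpr ⟨hne, hij⟩⟩⟩)
  -- compute the measure of A (last) via the sum of indicators
  have hsum : ∑ j, μ (A j) = (k : ℝ≥0∞) := by
    have h1 : ∀ j, μ (A j) = ∫⁻ ω, (A j).indicator (fun _ => (1:ℝ≥0∞)) ω ∂μ := by
      intro j
      exact (lintegral_indicator_one (hAmeas j)).symm
    calc ∑ j, μ (A j)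
        = ∑ j, ∫⁻ ω, (A j).indicator (fun _ => (1:ℝ≥0∞)) ω ∂μ := by
          exact Finset.sum_congr rfl fun j _ => h1 j
      _ = ∫⁻ ω, ∑ j, (A j).indicator (fun _ => (1:ℝ≥0∞)) ω ∂μ := by
          rw [lintegral_finset_sum]
          exact fun j _ => (measurable_const.indicator (hAmeas j))
      _ = ∫⁻ _, (k : ℝ≥0∞) ∂μ := by
          refine lintegral_congr_ae ?_
          have hTc : ∀ᵐ ω ∂μ, ω ∉ T := by
            rw [ae_iff]
            simpa using hTnull
          filter_upwards [hTc] with ω hω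
          have hxinj := hinj ω hω
          have hcount := rank_count_aux (F ω) hxinj k (by simp; omega)
          have : ∑ j, (A j).indicator (fun _ => (1:ℝ≥0∞)) ω
              = ((Finset.univ.filter fun j => ω ∈ A j).card : ℝ≥0∞) := by
            rw [Finset.card_filter]
            push_cast
            refine Finset.sum_congr rfl fun j _ => ?_
            by_cases hj : ω ∈ A j <;> simp [Set.indicator_apply, hj]
          rw [this]
          have heq : (Finset.univ.filter fun j => ω ∈ A j)
              = (Finset.univ.filter fun j => rank (F ω) j ≤ k) := by
            apply Finset.filter_congr
            intro j _
            simp [hA, hSdef]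
          rw [heq]
          exact_mod_cast hcount
      _ = (k : ℝ≥0∞) := by simp
  have hcard : μ (A (Fin.last n)) = (k : ℝ≥0∞) / ((n : ℝ≥0∞) + 1) := by
    have h2 : ((n:ℝ≥0∞) + 1) * μ (A (Fin.last n)) = (k : ℝ≥0∞) := by
      calc ((n:ℝ≥0∞) + 1) * μ (A (Fin.last n))
          = ∑ _j : Fin (n+1), μ (A (Fin.last n)) := by
            rw [Finset.sum_const]
            simp [Finset.card_univ, mul_comm]
      _ = ∑ j, μ (A j) := (Finset.sum_congr rfl fun j _ => (hAeq j).symm)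
      _ = (k : ℝ≥0∞) := hsum
    rw [ENNReal.eq_div_iff (by simp) (by simp)]
    exact h2
  -- the target event is contained in A (last) ∪ T
  have hsub : {ω | (E (Fin.last n) ω : EReal) ≤
        kthSmallest (Multiset.map (fun i : Fin n => E i.castSucc ω) Finset.univ.val) k}
      ⊆ A (Fin.last n) ∪ T := by
    intro ω hω
    by_cases hωT : ω ∈ T
    · exact Or.inr hωT
    refine Or.inl ?_
    simp only [Set.mem_setOf_eq] at hω
    have hxinj := hinj ω hωT
    set t := E (Fin.last n) ω with htdef
    have hlt : (Finset.univ.filter fun i : Fin n => E i.castSucc ω < t).card ≤ k - 1 :=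
      kth_count_aux _ t k hk1 hk hω
    -- rank of the last coordinate
    show rank (F ω) (Fin.last n) ≤ k
    have hstep : (Finset.univ.filter fun i : Fin (n+1) => E i ω ≤ t).card
        = (Finset.univ.filter fun i : Fin n => E i.castSucc ω ≤ t).card + 1 := by
      rw [Finset.card_filter, Finset.card_filter, Fin.sum_univ_castSucc]
      simp [htdef]
    have hle_lt : (Finset.univ.filter fun i : Fin n => E i.castSucc ω ≤ t).card
        = (Finset.univ.filter fun i : Fin n => E i.castSucc ω < t).card := by
      congr 1
      apply Finset.filter_congr
      intro i _
      have hne : E i.castSucc ω ≠ t := by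
        intro h
        exact absurd (hxinj (a₁ := i.castSucc) (a₂ := Fin.last n) h)
          (Fin.castSucc_lt_last i).ne
      constructor
      · intro h; exact lt_of_le_of_ne h hne
      · intro h; exact h.le
    have : rank (F ω) (Fin.last n)
        = (Finset.univ.filter fun i : Fin (n+1) => E i ω ≤ t).card := rfl
    rw [this, hstep, hle_lt]
    omega
  -- conclude
  calc μ {ω | (E (Fin.last n) ω : EReal) ≤
        kthSmallest (Multiset.map (fun i : Fin n => E i.castSucc ω) Finset.univ.val) k}
      ≤ μ (A (Fin.last n) ∪ T) := measure_mono hsub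
    _ ≤ μ (A (Fin.last n)) + μ T := measure_union_le _ _
    _ = (k : ℝ≥0∞) / ((n : ℝ≥0∞) + 1) := by rw [hTnull, hcard, add_zero]
    _ ≤ ENNReal.ofReal (1 - α + 1 / ((n : ℝ) + 1)) := by
        have hle : (k : ℝ) / ((n:ℝ) + 1) ≤ 1 - α + 1 / ((n : ℝ) + 1) := by
          have hceil : (k : ℝ) ≤ (1 - α) * ((n : ℝ) + 1) + 1 := by
            rw [hkdef]
            have := Nat.ceil_lt_add_one (by nlinarith : (0:ℝ) ≤ (1 - α) * ((n : ℝ) + 1))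
            linarith
          rw [div_le_iff₀ hnpos]
          calc (k : ℝ) ≤ (1 - α) * ((n : ℝ) + 1) + 1 := hceil
            _ = (1 - α + 1 / ((n : ℝ) + 1)) * ((n:ℝ) + 1) := by field_simp
        have hrw : (k : ℝ≥0∞) / ((n : ℝ≥0∞) + 1)
            = ENNReal.ofReal ((k : ℝ) / ((n:ℝ) + 1)) := by
          rw [ENNReal.ofReal_div_of_pos hnpos]
          congr 1
          · exact (ENNReal.ofReal_natCast k).symm
          · rw [ENNReal.ofReal_add (by positivity) zero_le_one]
            simp
        rw [hrw]
        exact ENNReal.ofReal_le_ofReal hle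
end
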